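/- The function (x₁,…,x_N) ↦ ∑ᵢ η(xᵢ) - η(∑ᵢ xᵢ) is concave on the cone of nonnegative real N-tuples, where η(t) = -t·log t with η(0)=0. -/

import Mathlib

open Real Finset

lemma gibbs {u v : ℝ} (hu : 0 ≤ u) (hv : 0 < v) :
    u - v ≤ u * (Real.log u - Real.log v) := by
  rcases eq_or_lt_of_le hu with h | h
  · simp [← h]; linarith
  · have h1 : Real.log (v / u) ≤ v / u - 1 := Real.log_le_sub_one_of_pos (by positivity)
    rw [Real.log_div hv.ne' h.ne'] at h1
    have := mul_le_mul_of_nonneg_left h1 hu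
    have hne : u ≠ 0 := h.ne'
    calc u - v = -(u * (v/u - 1)) := by field_simp; ring
    _ ≤ -(u * (Real.log v - Real.log u)) := by nlinarith
    _ = u * (Real.log u - Real.log v) := by ring

lemma key0 {q y B : ℝ} (hq : 0 ≤ q) (hy : 0 ≤ y) (hB : y ≤ B) :
    q*(y*Real.log B - y*Real.log y) ≤ (q*y)*Real.log (q*B) - (q*y)*Real.log (q*y) := by
  rcases eq_or_lt_of_le hy with h | h
  · simp [← h]
  rcases eq_or_lt_of_le hq with h' | h'
  · simp [← h']
  have hBpos : 0 < B := lt_of_lt_of_le h hB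
  rw [Real.log_mul h'.ne' hBpos.ne', Real.log_mul h'.ne' h.ne']
  ring_nf
  linarith

lemma key {p q x y A B : ℝ} (hp : 0 ≤ p) (hq : 0 ≤ q) (hx : 0 ≤ x) (hA : x ≤ A)
    (hy : 0 ≤ y) (hB : y ≤ B) :
    p*(x*Real.log A - x*Real.log x) + q*(y*Real.log B - y*Real.log y)
      ≤ (p*x+q*y)*Real.log (p*A+q*B) - (p*x+q*y)*Real.log (p*x+q*y) := by
  by_cases hpA : p * A = 0
  · have hpx : p * x = 0 := le_antisymm (by calc p*x ≤ p*A := mul_le_mul_of_nonneg_left hA hp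
      _ = 0 := hpA) (mul_nonneg hp hx)
    have h1 : p*(x*Real.log A - x*Real.log x) = 0 := by
      rcases mul_eq_zero.mp hpx with h | h <;> simp [h]
    rw [hpx, hpA, zero_add, zero_add, h1, zero_add]
    exact key0 hq hy hB
  by_cases hqB : q * B = 0
  · have hqy : q * y = 0 := le_antisymm (by calc q*y ≤ q*B := mul_le_mul_of_nonneg_left hB hq
      _ = 0 := hqB) (mul_nonneg hq hy)
    have h1 : q*(y*Real.log B - y*Real.log y) = 0 := by
      rcases mul_eq_zero.mp hqy with h | h <;> simp [h]
    rw [hqy, hqB, add_zero, add_zero, h1, add_zero]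
    exact key0 hp hx hA
  obtain ⟨hp0, hA0⟩ := mul_ne_zero_iff.mp hpA
  obtain ⟨hq0, hB0⟩ := mul_ne_zero_iff.mp hqB
  have hp' : 0 < p := hp.lt_of_ne (Ne.symm hp0)
  have hq' : 0 < q := hq.lt_of_ne (Ne.symm hq0)
  have hA' : 0 < A := (le_trans hx hA).lt_of_ne (Ne.symm hA0)
  have hB' : 0 < B := (le_trans hy hB).lt_of_ne (Ne.symm hB0)
  have hC : 0 < p*A + q*B := by positivity
  by_cases hc : p*x + q*y = 0
  · have hx0 : x = 0 := by nlinarith [mul_nonneg hp hx, mul_nonneg hq hy]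
    have hy0 : y = 0 := by nlinarith [mul_nonneg hp hx, mul_nonneg hq hy]
    simp [hx0, hy0]
  have hc' : 0 < p*x + q*y := (add_nonneg (mul_nonneg hp hx) (mul_nonneg hq hy)).lt_of_ne
    (Ne.symm hc)
  -- identities
  have id1 : ∀ (r z Z : ℝ), 0 < r → 0 ≤ z → 0 < Z →
      r*(z*Real.log Z - z*Real.log z)
        = (r*z)*(Real.log (r*Z*(p*x+q*y)/(p*A+q*B)) - Real.log (r*z))
          + (r*z)*(Real.log (p*A+q*B) - Real.log (p*x+q*y)) := by
    intro r z Z hr hz hZ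
    rcases eq_or_lt_of_le hz with h | h
    · simp [← h]
    rw [Real.log_div (by positivity) hC.ne', Real.log_mul (by positivity) hc'.ne',
      Real.log_mul hr.ne' hZ.ne', Real.log_mul hr.ne' h.ne']
    ring
  have e1 := id1 p x A hp' hx hA'
  have e2 := id1 q y B hq' hy hB'
  have g1 : (p*x)*(Real.log (p*A*(p*x+q*y)/(p*A+q*B)) - Real.log (p*x))
      ≤ p*A*(p*x+q*y)/(p*A+q*B) - p*x := by
    have := gibbs (u := p*x) (v := p*A*(p*x+q*y)/(p*A+q*B)) (by positivity) (by positivity)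
    nlinarith [this]
  have g2 : (q*y)*(Real.log (q*B*(p*x+q*y)/(p*A+q*B)) - Real.log (q*y))
      ≤ q*B*(p*x+q*y)/(p*A+q*B) - q*y := by
    have := gibbs (u := q*y) (v := q*B*(p*x+q*y)/(p*A+q*B)) (by positivity) (by positivity)
    nlinarith [this]
  have hv : p*A*(p*x+q*y)/(p*A+q*B) + q*B*(p*x+q*y)/(p*A+q*B) = p*x + q*y := by
    field_simp
  have hsplit : (p*x)*(Real.log (p*A+q*B) - Real.log (p*x+q*y))
      + (q*y)*(Real.log (p*A+q*B) - Real.log (p*x+q*y))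
      = (p*x+q*y)*Real.log (p*A+q*B) - (p*x+q*y)*Real.log (p*x+q*y) := by ring
  rw [e1, e2]
  linarith [g1, g2, hv, hsplit]

theorem S1_concave (N : ℕ) :
    ConcaveOn ℝ {x : Fin N → ℝ | ∀ i, 0 ≤ x i}
      (fun x => (∑ i, (-x i * Real.log (x i))) -
        (-(∑ i, x i) * Real.log (∑ i, x i))) := by
  constructor
  · intro x hx y hy a b ha hb hab i
    simp only [Pi.add_apply, Pi.smul_apply, smul_eq_mul]
    exact add_nonneg (mul_nonneg ha (hx i)) (mul_nonneg hb (hy i))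
  · intro x hx y hy a b ha hb hab
    simp only [smul_eq_mul, Pi.add_apply, Pi.smul_apply]
    have hid : ∀ z : Fin N → ℝ,
        (∑ i, (-z i * Real.log (z i))) - (-(∑ i, z i) * Real.log (∑ i, z i))
          = ∑ i, (z i * Real.log (∑ j, z j) - z i * Real.log (z i)) := by
      intro z
      rw [Finset.sum_sub_distrib, ← Finset.sum_mul]
      simp only [neg_mul]
      rw [Finset.sum_neg_distrib]
      ring
    rw [hid, hid, hid]
    have hS : ∀ j : Fin N, (∑ i, (a * x i + b * y i)) = a * (∑ i, x i) + b * (∑ i, y i) := by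
      intro _; rw [Finset.sum_add_distrib, Finset.mul_sum, Finset.mul_sum]
    calc a * ∑ i, (x i * Real.log (∑ j, x j) - x i * Real.log (x i))
        + b * ∑ i, (y i * Real.log (∑ j, y j) - y i * Real.log (y i))
        = ∑ i, (a * (x i * Real.log (∑ j, x j) - x i * Real.log (x i))
            + b * (y i * Real.log (∑ j, y j) - y i * Real.log (y i))) := by
          rw [Finset.sum_add_distrib, Finset.mul_sum, Finset.mul_sum]
      _ ≤ ∑ i, ((a * x i + b * y i) * Real.log (∑ j, (a * x j + b * y j))
            - (a * x i + b * y i) * Real.log (a * x i + b * y i)) := by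
          apply Finset.sum_le_sum
          intro i _
          rw [hS i]
          exact key ha hb (hx i) (Finset.single_le_sum (fun j _ => hx j) (Finset.mem_univ i))
            (hy i) (Finset.single_le_sum (fun j _ => hy j) (Finset.mem_univ i))
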